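/- (A network in the feature-averaging regime has nearly perfect clean accuracy) Let d, k, m ≥ 1 with d ≥ 2 and 8k · ln d ≤ √d, let μ : Fin k → ℝ^d be orthogonal equinorm cluster features with binary cluster labels s, and let c ≥ 1 be real. Let f be a two-layer ReLU network with weights w : {−1,1} × Fin m → ℝ^d and biases b : {−1,1} × Fin m → ℝ, and suppose there are reals λ > 0 and ε ≥ 0 with (12 + 4c) · ε < λ such that for every σ ∈ {−1,1} and r ∈ Fin m: ‖w_{σ,r} − (λ/d) · Σ_{j ∈ J_σ} μ_j‖ ≤ ε/√d and |b_{σ,r}| ≤ ε (with J_σ = J₊ if σ = 1 and J_σ = J₋ if σ = −1). Then the probability over (J, ξ) ~ (uniform on Fin k) ⊗ γ_d that sgn(f(μ_J + ξ)) = s J is at least 1 − 2k · d^{−(ln d)/2} − 2 · d^{−ln d}. -/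

import Mathlib

open MeasureTheory ProbabilityTheory Real Finset
open scoped RealInnerProductSpace

/-- The standard Gaussian measure on `ℝ^d`. -/
noncomputable def stdGaussian (d : ℕ) : Measure (EuclideanSpace ℝ (Fin d)) :=
  (Measure.pi fun _ : Fin d => gaussianReal 0 1).map (MeasurableEquiv.toLp 2 (Fin d → ℝ))

/-- The sign function: `1` on positive reals, `-1` otherwise. -/
noncomputable def sgn (z : ℝ) : ℝ := if 0 < z then 1 else -1

/-- The ReLU activation. -/
noncomputable def relu (z : ℝ) : ℝ := max z 0

/-- A two-layer ReLU network with `m` positive neurons (weights `wp`, biases `bp`)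
and `m` negative neurons (weights `wn`, biases `bn`). -/
noncomputable def twoLayer {d m : ℕ} (wp wn : Fin m → EuclideanSpace ℝ (Fin d))
    (bp bn : Fin m → ℝ) (x : EuclideanSpace ℝ (Fin d)) : ℝ :=
  (1 / m) * ∑ r : Fin m, relu (⟪wp r, x⟫ + bp r) -
    (1 / m) * ∑ r : Fin m, relu (⟪wn r, x⟫ + bn r)

instance (d : ℕ) : IsProbabilityMeasure (stdGaussian d) :=
  Measure.isProbabilityMeasure_map (MeasurableEquiv.toLp 2 (Fin d → ℝ)).measurable.aemeasurable

lemma lintegral_pi_prod {n : ℕ} (μ : Measure ℝ) [SigmaFinite μ] (f : Fin n → ℝ → ENNReal)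
    (hf : ∀ i, Measurable (f i)) :
    ∫⁻ x : Fin n → ℝ, ∏ i, f i (x i) ∂(Measure.pi fun _ => μ) = ∏ i, ∫⁻ x, f i x ∂μ := by
  induction n with
  | zero => simp
  | succ n ih =>
    have hmp := (measurePreserving_piFinSuccAbove (fun _ : Fin (n+1) => μ) 0).symm
    rw [← hmp.lintegral_comp_emb (MeasurableEquiv.measurableEmbedding _)]
    simp_rw [MeasurableEquiv.piFinSuccAbove_symm_apply, Fin.insertNthEquiv,
      Fin.prod_univ_succ, Fin.insertNth_zero]
    simp only [Fin.zero_succAbove, Function.comp_def, Fin.cons_zero, Fin.cons_succ,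
      Equiv.coe_fn_mk, cast_eq]
    have hmeas : Measurable fun y : Fin n → ℝ => ∏ i : Fin n, f i.succ (y i) :=
      Finset.measurable_prod _ fun i _ => (hf i.succ).comp (measurable_pi_apply i)
    rw [lintegral_prod_mul (hf 0).aemeasurable hmeas.aemeasurable,
      ih (fun i => f i.succ) (fun i => hf i.succ)]

lemma gauss_lintegral_exp_mul (c : ℝ) :
    ∫⁻ x, ENNReal.ofReal (Real.exp (c * x)) ∂(gaussianReal 0 1) =
      ENNReal.ofReal (Real.exp (c ^ 2 / 2)) := by
  have hfm : Measurable fun x : ℝ => ENNReal.ofReal (Real.exp (c * x)) :=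
    (Real.measurable_exp.comp (measurable_id.const_mul c)).ennreal_ofReal
  rw [gaussianReal_of_var_ne_zero 0 one_ne_zero,
    lintegral_withDensity_eq_lintegral_mul _ (measurable_gaussianPDF 0 1) hfm]
  have hint : Integrable (fun x : ℝ => Real.exp (-(1/2) * (x - c)^2)) :=
    (integrable_exp_neg_mul_sq (by norm_num : (0:ℝ) < 1/2)).comp_sub_right c
  have key : ((fun x : ℝ => gaussianPDF 0 1 x) * fun x => ENNReal.ofReal (Real.exp (c * x))) =
      fun x : ℝ => ENNReal.ofReal
        ((Real.sqrt (2 * π))⁻¹ * Real.exp (c^2/2) * Real.exp (-(1/2) * (x - c)^2)) := by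
    funext x
    simp only [Pi.mul_apply, gaussianPDF]
    rw [← ENNReal.ofReal_mul (gaussianPDFReal_nonneg 0 1 x)]
    congr 1
    simp only [gaussianPDFReal, NNReal.coe_one, mul_one, sub_zero]
    rw [mul_assoc, ← Real.exp_add, mul_assoc, ← Real.exp_add]
    congr 1
    ring
  rw [key, ← ofReal_integral_eq_lintegral_ofReal
    (by exact (hint.const_mul _)) (Filter.Eventually.of_forall fun x => by positivity)]
  congr 1
  rw [integral_const_mul, integral_sub_right_eq_self (fun a => Real.exp (-(1/2) * a^2)) c,
    integral_gaussian, show π / (1/2 : ℝ) = 2 * π by ring]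
  have h : Real.sqrt (2 * π) ≠ 0 := by positivity
  field_simp

lemma gauss_lintegral_exp_sq :
    ∫⁻ x, ENNReal.ofReal (Real.exp (x ^ 2 / 4)) ∂(gaussianReal 0 1) =
      ENNReal.ofReal (Real.sqrt 2) := by
  have hfm : Measurable fun x : ℝ => ENNReal.ofReal (Real.exp (x ^ 2 / 4)) :=
    (Real.measurable_exp.comp ((measurable_id.pow_const 2).div_const 4)).ennreal_ofReal
  rw [gaussianReal_of_var_ne_zero 0 one_ne_zero,
    lintegral_withDensity_eq_lintegral_mul _ (measurable_gaussianPDF 0 1) hfm]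
  have hint : Integrable (fun x : ℝ => Real.exp (-(1/4) * x^2)) :=
    integrable_exp_neg_mul_sq (by norm_num : (0:ℝ) < 1/4)
  have key : ((fun x : ℝ => gaussianPDF 0 1 x) * fun x => ENNReal.ofReal (Real.exp (x^2/4))) =
      fun x : ℝ => ENNReal.ofReal
        ((Real.sqrt (2 * π))⁻¹ * Real.exp (-(1/4) * x^2)) := by
    funext x
    simp only [Pi.mul_apply, gaussianPDF]
    rw [← ENNReal.ofReal_mul (gaussianPDFReal_nonneg 0 1 x)]
    congr 1
    simp only [gaussianPDFReal, NNReal.coe_one, mul_one, sub_zero]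
    rw [mul_assoc, ← Real.exp_add]
    congr 1
    ring
  rw [key, ← ofReal_integral_eq_lintegral_ofReal
    (by exact (hint.const_mul _)) (Filter.Eventually.of_forall fun x => by positivity)]
  congr 1
  rw [integral_const_mul, integral_gaussian, show π / (1/4 : ℝ) = 4 * π by ring]
  rw [show (4 : ℝ) * π = 2 * (2 * π) by ring]
  nth_rewrite 2 [Real.sqrt_mul (by norm_num : (0:ℝ) ≤ 2)]
  rw [mul_comm (Real.sqrt 2), ← mul_assoc, inv_mul_cancel₀ (by positivity : Real.sqrt (2*π) ≠ 0),
    one_mul]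

lemma sum_sq_eq_norm_sq {d : ℕ} (a : EuclideanSpace ℝ (Fin d)) :
    ∑ i, a i ^ 2 = ‖a‖ ^ 2 := by
  rw [EuclideanSpace.norm_eq, Real.sq_sqrt (by positivity)]
  simp [sq_abs]

lemma stdGaussian_lintegral_exp_inner {d : ℕ} (a : EuclideanSpace ℝ (Fin d)) (s : ℝ) :
    ∫⁻ ξ, ENNReal.ofReal (Real.exp (s * ⟪a, ξ⟫)) ∂(stdGaussian d) =
      ENNReal.ofReal (Real.exp (s ^ 2 * ‖a‖ ^ 2 / 2)) := by
  have hptwise : ∀ ξ : EuclideanSpace ℝ (Fin d),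
      ENNReal.ofReal (Real.exp (s * ⟪a, ξ⟫)) =
      ∏ i, ENNReal.ofReal (Real.exp ((s * a i) * ξ i)) := by
    intro ξ
    rw [← ENNReal.ofReal_prod_of_nonneg (fun i _ => (Real.exp_pos _).le), ← Real.exp_sum]
    congr 1
    rw [PiLp.inner_apply]
    simp only [RCLike.inner_apply, conj_trivial]
    rw [Finset.mul_sum]
    simp_rw [mul_assoc, mul_comm (ξ.ofLp _)]
  simp_rw [hptwise]
  rw [show (∫⁻ ξ, ∏ i, ENNReal.ofReal (Real.exp ((s * a i) * ξ i)) ∂(stdGaussian d)) =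
      ∏ i, ∫⁻ x, ENNReal.ofReal (Real.exp ((s * a i) * x)) ∂(gaussianReal 0 1) from
    by rw [_root_.stdGaussian, lintegral_map_equiv]; exact lintegral_pi_prod _ _ (fun i =>
      (Real.measurable_exp.comp (measurable_id.const_mul _)).ennreal_ofReal)]
  simp_rw [gauss_lintegral_exp_mul]
  rw [← ENNReal.ofReal_prod_of_nonneg (fun i _ => (Real.exp_pos _).le), ← Real.exp_sum]
  congr 2
  rw [← Finset.sum_div, ← sum_sq_eq_norm_sq a, Finset.mul_sum]
  congr 1
  exact Finset.sum_congr rfl fun i _ => by ring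

lemma stdGaussian_lintegral_exp_normsq {d : ℕ} :
    ∫⁻ ξ : EuclideanSpace ℝ (Fin d), ENNReal.ofReal (Real.exp (‖ξ‖ ^ 2 / 4)) ∂(stdGaussian d) =
      ENNReal.ofReal (Real.sqrt 2 ^ d) := by
  have hptwise : ∀ ξ : EuclideanSpace ℝ (Fin d),
      ENNReal.ofReal (Real.exp (‖ξ‖ ^ 2 / 4)) =
      ∏ i, ENNReal.ofReal (Real.exp (ξ i ^ 2 / 4)) := by
    intro ξ
    rw [← ENNReal.ofReal_prod_of_nonneg (fun i _ => (Real.exp_pos _).le), ← Real.exp_sum]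
    congr 1
    rw [← sum_sq_eq_norm_sq ξ, Finset.sum_div]
  simp_rw [hptwise]
  rw [show (∫⁻ ξ : EuclideanSpace ℝ (Fin d), ∏ i, ENNReal.ofReal (Real.exp (ξ i ^ 2 / 4))
        ∂(stdGaussian d)) =
      ∏ _i : Fin d, ∫⁻ x, ENNReal.ofReal (Real.exp (x ^ 2 / 4)) ∂(gaussianReal 0 1) from
    by rw [_root_.stdGaussian, lintegral_map_equiv]; exact lintegral_pi_prod _ _ (fun i =>
      (Real.measurable_exp.comp ((measurable_id.pow_const 2).div_const 4)).ennreal_ofReal)]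
  simp_rw [gauss_lintegral_exp_sq]
  rw [Finset.prod_const, card_univ, Fintype.card_fin,
    ← ENNReal.ofReal_pow (Real.sqrt_nonneg 2)]

lemma stdGaussian_inner_tail {d : ℕ} (a : EuclideanSpace ℝ (Fin d)) (s t : ℝ) (hs : 0 < s) :
    stdGaussian d {ξ | t ≤ ⟪a, ξ⟫} ≤ ENNReal.ofReal (Real.exp (s ^ 2 * ‖a‖ ^ 2 / 2 - s * t)) := by
  have hfm : Measurable fun ξ : EuclideanSpace ℝ (Fin d) =>
      ENNReal.ofReal (Real.exp (s * ⟪a, ξ⟫)) := by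
    have h1 : Continuous fun ξ : EuclideanSpace ℝ (Fin d) => ⟪a, ξ⟫ :=
      continuous_const.inner continuous_id
    exact (Real.measurable_exp.comp (h1.measurable.const_mul s)).ennreal_ofReal
  have hsub : {ξ : EuclideanSpace ℝ (Fin d) | t ≤ ⟪a, ξ⟫} ⊆
      {ξ | ENNReal.ofReal (Real.exp (s * t)) ≤ ENNReal.ofReal (Real.exp (s * ⟪a, ξ⟫))} := by
    intro ξ hξ
    exact ENNReal.ofReal_le_ofReal (Real.exp_le_exp.2 (mul_le_mul_of_nonneg_left hξ hs.le))
  calc stdGaussian d {ξ | t ≤ ⟪a, ξ⟫} ≤ stdGaussian d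
        {ξ | ENNReal.ofReal (Real.exp (s * t)) ≤ ENNReal.ofReal (Real.exp (s * ⟪a, ξ⟫))} :=
      measure_mono hsub
    _ ≤ (∫⁻ ξ, ENNReal.ofReal (Real.exp (s * ⟪a, ξ⟫)) ∂(stdGaussian d)) /
        ENNReal.ofReal (Real.exp (s * t)) :=
      meas_ge_le_lintegral_div hfm.aemeasurable
        (by simp [Real.exp_pos]) ENNReal.ofReal_ne_top
    _ = ENNReal.ofReal (Real.exp (s ^ 2 * ‖a‖ ^ 2 / 2 - s * t)) := by
      rw [stdGaussian_lintegral_exp_inner, Real.exp_sub,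
        ENNReal.ofReal_div_of_pos (Real.exp_pos _)]

lemma stdGaussian_norm_tail {d : ℕ} :
    stdGaussian d {ξ : EuclideanSpace ℝ (Fin d) | 2 * Real.sqrt d ≤ ‖ξ‖} ≤
      ENNReal.ofReal (Real.sqrt 2 ^ d * Real.exp (-(d : ℝ))) := by
  have hfm : Measurable fun ξ : EuclideanSpace ℝ (Fin d) =>
      ENNReal.ofReal (Real.exp (‖ξ‖ ^ 2 / 4)) := by
    exact (Real.measurable_exp.comp
      ((continuous_norm.measurable.pow_const 2).div_const 4)).ennreal_ofReal
  have hsub : {ξ : EuclideanSpace ℝ (Fin d) | 2 * Real.sqrt d ≤ ‖ξ‖} ⊆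
      {ξ | ENNReal.ofReal (Real.exp (d : ℝ)) ≤ ENNReal.ofReal (Real.exp (‖ξ‖ ^ 2 / 4))} := by
    intro ξ hξ
    simp only [Set.mem_setOf_eq] at hξ ⊢
    apply ENNReal.ofReal_le_ofReal
    apply Real.exp_le_exp.2
    have h1 : (2 * Real.sqrt d) ^ 2 ≤ ‖ξ‖ ^ 2 :=
      pow_le_pow_left₀ (by positivity) hξ 2
    rw [mul_pow, Real.sq_sqrt (Nat.cast_nonneg d)] at h1
    nlinarith
  calc stdGaussian d {ξ : EuclideanSpace ℝ (Fin d) | 2 * Real.sqrt d ≤ ‖ξ‖} ≤ stdGaussian d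
        {ξ | ENNReal.ofReal (Real.exp (d : ℝ)) ≤ ENNReal.ofReal (Real.exp (‖ξ‖ ^ 2 / 4))} :=
      measure_mono hsub
    _ ≤ (∫⁻ ξ, ENNReal.ofReal (Real.exp (‖ξ‖ ^ 2 / 4)) ∂(stdGaussian d)) /
        ENNReal.ofReal (Real.exp (d : ℝ)) :=
      meas_ge_le_lintegral_div hfm.aemeasurable
        (by simp [Real.exp_pos]) ENNReal.ofReal_ne_top
    _ ≤ ENNReal.ofReal (Real.sqrt 2 ^ d * Real.exp (-(d : ℝ))) := by
      rw [stdGaussian_lintegral_exp_normsq,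
        ← ENNReal.ofReal_div_of_pos (Real.exp_pos _)]
      apply ENNReal.ofReal_le_ofReal
      rw [Real.exp_neg, div_eq_mul_inv]

lemma inner_estimate {d k : ℕ} (hd1 : 1 ≤ d) {μ : Fin k → EuclideanSpace ℝ (Fin d)}
    (hnorm : ∀ j, ‖μ j‖ = Real.sqrt d) (horth : ∀ i j, i ≠ j → ⟪μ i, μ j⟫ = 0)
    {lam eps : ℝ} (hlam : 0 < lam) (heps : 0 ≤ eps)
    (hK : (k : ℝ) * Real.log d ≤ Real.sqrt d / 8)
    (S : Finset (Fin k)) (w : EuclideanSpace ℝ (Fin d)) (b : ℝ)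
    (hw : ‖w - (lam / d) • ∑ j' ∈ S, μ j'‖ ≤ eps / Real.sqrt d) (hb : |b| ≤ eps)
    (j : Fin k) (ξ : EuclideanSpace ℝ (Fin d))
    (hξ1 : ∀ j', |⟪μ j', ξ⟫| ≤ Real.sqrt d * Real.log d) (hξ2 : ‖ξ‖ ≤ 2 * Real.sqrt d) :
    |⟪w, μ j + ξ⟫ + b - (if j ∈ S then lam else 0)| ≤ lam / 8 + 4 * eps := by
  have hd0 : (0 : ℝ) < d := by exact_mod_cast Nat.lt_of_lt_of_le Nat.zero_lt_one hd1
  have hsd : (0 : ℝ) < Real.sqrt d := Real.sqrt_pos.2 hd0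
  set v : EuclideanSpace ℝ (Fin d) := (lam / d) • ∑ j' ∈ S, μ j' with hv
  set x : EuclideanSpace ℝ (Fin d) := μ j + ξ with hx
  have hxnorm : ‖x‖ ≤ 3 * Real.sqrt d := by
    calc ‖x‖ ≤ ‖μ j‖ + ‖ξ‖ := norm_add_le _ _
      _ ≤ Real.sqrt d + 2 * Real.sqrt d := by rw [hnorm j]; linarith
      _ = 3 * Real.sqrt d := by ring
  -- error term
  have h1 : |⟪w - v, x⟫| ≤ 3 * eps := by
    calc |⟪w - v, x⟫| ≤ ‖w - v‖ * ‖x‖ := abs_real_inner_le_norm _ _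
      _ ≤ (eps / Real.sqrt d) * (3 * Real.sqrt d) := by
        apply mul_le_mul hw hxnorm (norm_nonneg _) (by positivity)
      _ = 3 * eps := by field_simp
  -- main term
  have h2 : ⟪v, x⟫ = (lam / d) * (if j ∈ S then (d : ℝ) else 0)
      + (lam / d) * ∑ j' ∈ S, ⟪μ j', ξ⟫ := by
    rw [hv, hx, real_inner_smul_left, inner_add_right, sum_inner, sum_inner, ← mul_add]
    congr 2
    have : ∀ j' ∈ S, ⟪μ j', μ j⟫ = if j' = j then (d : ℝ) else 0 := by
      intro j' _
      by_cases h : j' = j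
      · subst h
        rw [if_pos rfl, real_inner_self_eq_norm_sq, hnorm, Real.sq_sqrt hd0.le]
      · rw [if_neg h, horth _ _ h]
    rw [Finset.sum_congr rfl this, Finset.sum_ite_eq' S j fun _ => (d : ℝ)]
  have h3 : |(lam / d) * ∑ j' ∈ S, ⟪μ j', ξ⟫| ≤ lam / 8 := by
    have hsum : |∑ j' ∈ S, ⟪μ j', ξ⟫| ≤ (k : ℝ) * (Real.sqrt d * Real.log d) := by
      calc |∑ j' ∈ S, ⟪μ j', ξ⟫| ≤ ∑ j' ∈ S, |⟪μ j', ξ⟫| := Finset.abs_sum_le_sum_abs _ _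
        _ ≤ ∑ _j' ∈ S, Real.sqrt d * Real.log d := Finset.sum_le_sum fun j' _ => hξ1 j'
        _ = S.card * (Real.sqrt d * Real.log d) := by rw [Finset.sum_const, nsmul_eq_mul]
        _ ≤ (k : ℝ) * (Real.sqrt d * Real.log d) := by
          apply mul_le_mul_of_nonneg_right _ (by positivity : (0:ℝ) ≤ _)
          exact_mod_cast Finset.card_le_card (Finset.subset_univ S) |>.trans
            (le_of_eq (by simp))
    have hdd : Real.sqrt d * Real.sqrt d = (d : ℝ) := Real.mul_self_sqrt hd0.le
    rw [abs_mul, abs_of_pos (by positivity : (0:ℝ) < lam / d)]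
    calc (lam / d) * |∑ j' ∈ S, ⟪μ j', ξ⟫| ≤ (lam / d) * ((k : ℝ) * (Real.sqrt d * Real.log d)) :=
        mul_le_mul_of_nonneg_left hsum (by positivity)
      _ ≤ (lam / d) * ((Real.sqrt d / 8) * Real.sqrt d) := by
        apply mul_le_mul_of_nonneg_left _ (by positivity)
        calc (k : ℝ) * (Real.sqrt d * Real.log d) = ((k : ℝ) * Real.log d) * Real.sqrt d := by ring
          _ ≤ (Real.sqrt d / 8) * Real.sqrt d := mul_le_mul_of_nonneg_right hK hsd.le
      _ = lam / 8 := by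
        rw [div_mul_eq_mul_div, mul_comm (Real.sqrt d / 8), mul_div_assoc, mul_comm, ← mul_div_assoc, hdd]
        field_simp
  have hif : (lam / d) * (if j ∈ S then (d : ℝ) else 0) = (if j ∈ S then lam else 0) := by
    split_ifs
    · field_simp
    · ring
  have hdecomp : ⟪w, x⟫ + b - (if j ∈ S then lam else 0) =
      ⟪w - v, x⟫ + (lam / d) * ∑ j' ∈ S, ⟪μ j', ξ⟫ + b := by
    rw [inner_sub_left, h2, hif]; ring
  rw [hdecomp]
  calc |⟪w - v, x⟫ + (lam / d) * ∑ j' ∈ S, ⟪μ j', ξ⟫ + b| ≤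
      |⟪w - v, x⟫ + (lam / d) * ∑ j' ∈ S, ⟪μ j', ξ⟫| + |b| := abs_add_le _ _
    _ ≤ (|⟪w - v, x⟫| + |(lam / d) * ∑ j' ∈ S, ⟪μ j', ξ⟫|) + |b| := by
        exact add_le_add_left (abs_add_le _ _) _
    _ ≤ (3 * eps + lam / 8) + eps := by
        apply add_le_add (add_le_add h1 h3) hb
    _ = lam / 8 + 4 * eps := by ring

lemma twoLayer_core {d k m : ℕ} (hd1 : 1 ≤ d) (hm : 1 ≤ m)
    {μ : Fin k → EuclideanSpace ℝ (Fin d)}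
    (hnorm : ∀ j, ‖μ j‖ = Real.sqrt d) (horth : ∀ i j, i ≠ j → ⟪μ i, μ j⟫ = 0)
    {lam eps c : ℝ} (hlam : 0 < lam) (heps : 0 ≤ eps) (hc : 1 ≤ c)
    (hle : (12 + 4 * c) * eps < lam)
    (hK : (k : ℝ) * Real.log d ≤ Real.sqrt d / 8)
    (SA SB : Finset (Fin k)) (wp wn : Fin m → EuclideanSpace ℝ (Fin d)) (bp bn : Fin m → ℝ)
    (hwp : ∀ r, ‖wp r - (lam / d) • ∑ j' ∈ SA, μ j'‖ ≤ eps / Real.sqrt d)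
    (hwn : ∀ r, ‖wn r - (lam / d) • ∑ j' ∈ SB, μ j'‖ ≤ eps / Real.sqrt d)
    (hbp : ∀ r, |bp r| ≤ eps) (hbn : ∀ r, |bn r| ≤ eps)
    (j : Fin k) (hjA : j ∈ SA) (hjB : j ∉ SB) (ξ : EuclideanSpace ℝ (Fin d))
    (hξ1 : ∀ j', |⟪μ j', ξ⟫| ≤ Real.sqrt d * Real.log d) (hξ2 : ‖ξ‖ ≤ 2 * Real.sqrt d) :
    0 < (1 / m) * ∑ r : Fin m, relu (⟪wp r, μ j + ξ⟫ + bp r) -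
      (1 / m) * ∑ r : Fin m, relu (⟪wn r, μ j + ξ⟫ + bn r) := by
  have hm0 : (0 : ℝ) < m := by exact_mod_cast Nat.lt_of_lt_of_le Nat.zero_lt_one hm
  have hA : ∀ r, 7 * lam / 8 - 4 * eps ≤ relu (⟪wp r, μ j + ξ⟫ + bp r) := by
    intro r
    have est := inner_estimate hd1 hnorm horth hlam heps hK SA (wp r) (bp r)
      (hwp r) (hbp r) j ξ hξ1 hξ2
    rw [if_pos hjA] at est
    have := (abs_le.1 est).1
    have hrelu : ⟪wp r, μ j + ξ⟫ + bp r ≤ relu (⟪wp r, μ j + ξ⟫ + bp r) := le_max_left _ _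
    linarith
  have hB : ∀ r, relu (⟪wn r, μ j + ξ⟫ + bn r) ≤ lam / 8 + 4 * eps := by
    intro r
    have est := inner_estimate hd1 hnorm horth hlam heps hK SB (wn r) (bn r)
      (hwn r) (hbn r) j ξ hξ1 hξ2
    rw [if_neg hjB, sub_zero] at est
    have h := (abs_le.1 est).2
    exact max_le (by linarith) (by positivity)
  have S1 : (m : ℝ) * (7 * lam / 8 - 4 * eps) ≤
      ∑ r : Fin m, relu (⟪wp r, μ j + ξ⟫ + bp r) := by
    have h := Finset.card_nsmul_le_sum Finset.univ
      (fun r : Fin m => relu (⟪wp r, μ j + ξ⟫ + bp r)) _ (fun r _ => hA r)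
    simpa [card_univ, nsmul_eq_mul] using h
  have S2 : ∑ r : Fin m, relu (⟪wn r, μ j + ξ⟫ + bn r) ≤ (m : ℝ) * (lam / 8) + (m : ℝ) * (4 * eps) := by
    have h := Finset.sum_le_card_nsmul Finset.univ
      (fun r : Fin m => relu (⟪wn r, μ j + ξ⟫ + bn r)) _ (fun r _ => hB r)
    simpa [card_univ, nsmul_eq_mul] using h
  have T1 : 7 * lam / 8 - 4 * eps ≤ (1 / m) * ∑ r : Fin m, relu (⟪wp r, μ j + ξ⟫ + bp r) := by
    rw [one_div, inv_mul_eq_div, le_div_iff₀ hm0]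
    linarith [S1]
  have T2 : (1 / m) * ∑ r : Fin m, relu (⟪wn r, μ j + ξ⟫ + bn r) ≤ lam / 8 + 4 * eps := by
    rw [one_div, inv_mul_eq_div, div_le_iff₀ hm0]
    linarith [S2]
  have h16 : 16 * eps ≤ (12 + 4 * c) * eps := by nlinarith
  linarith

lemma good_set_bound (d k : ℕ) (hd : 2 ≤ d) (hk : 1 ≤ k)
    (hlog : 8 * k * Real.log d ≤ Real.sqrt d)
    (μ : Fin k → EuclideanSpace ℝ (Fin d))
    (hnorm : ∀ j, ‖μ j‖ = Real.sqrt d) :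
    stdGaussian d {ξ : EuclideanSpace ℝ (Fin d) |
        ¬ ((∀ j', |⟪μ j', ξ⟫| ≤ Real.sqrt d * Real.log d) ∧ ‖ξ‖ ≤ 2 * Real.sqrt d)} ≤
      ENNReal.ofReal (2 * k * (d : ℝ) ^ (-(Real.log d) / 2) + 2 * (d : ℝ) ^ (-(Real.log d))) := by
  have hd0 : (0 : ℝ) < d := by
    have : (2:ℝ) ≤ d := by exact_mod_cast hd
    linarith
  have hd1 : (1 : ℝ) < d := by
    have : (2:ℝ) ≤ d := by exact_mod_cast hd
    linarith
  have hld : 0 < Real.log d := Real.log_pos hd1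
  have hsd : 0 < Real.sqrt d := Real.sqrt_pos.2 hd0
  set t : ℝ := Real.sqrt d * Real.log d with ht
  set sp : ℝ := Real.log d / Real.sqrt d with hsp
  have hsp0 : 0 < sp := by positivity
  -- single half-tail bound
  have hhalf : ∀ a : EuclideanSpace ℝ (Fin d), ‖a‖ = Real.sqrt d →
      stdGaussian d {ξ | t ≤ ⟪a, ξ⟫} ≤ ENNReal.ofReal ((d : ℝ) ^ (-(Real.log d) / 2)) := by
    intro a ha
    refine (stdGaussian_inner_tail a sp t hsp0).trans (le_of_eq ?_)
    congr 1
    rw [ha, ht, hsp, Real.rpow_def_of_pos hd0]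
    rw [Real.sq_sqrt hd0.le]
    have h2 : Real.sqrt d ^ 2 = (d : ℝ) := Real.sq_sqrt hd0.le
    congr 1
    field_simp
    nlinarith [h2]
  -- bound for minus version
  have hneg : ∀ j' : Fin k, ‖-(μ j')‖ = Real.sqrt d := fun j' => by rw [norm_neg]; exact hnorm j'
  -- norm tail
  have hnt : stdGaussian d {ξ : EuclideanSpace ℝ (Fin d) | 2 * Real.sqrt d ≤ ‖ξ‖} ≤
      ENNReal.ofReal ((d : ℝ) ^ (-(Real.log d))) := by
    refine stdGaussian_norm_tail.trans (ENNReal.ofReal_le_ofReal ?_)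
    have hlog2 : Real.log 2 ≤ 1 := by
      have := Real.log_le_sub_one_of_pos (by norm_num : (0:ℝ) < 2)
      linarith
    have h8 : 8 * Real.log d ≤ Real.sqrt d := by
      have hkk : (1:ℝ) ≤ k := by exact_mod_cast hk
      nlinarith [hlog, hld]
    have h64 : 64 * Real.log d ^ 2 ≤ d := by
      nlinarith [Real.sq_sqrt hd0.le, h8, hld]
    have hs2 : (0:ℝ) < Real.sqrt 2 := by positivity
    have hpow : Real.sqrt 2 ^ d = Real.exp (d * (Real.log 2 / 2)) := by
      rw [← Real.exp_log (pow_pos hs2 d), Real.log_pow, Real.log_sqrt (by norm_num : (0:ℝ) ≤ 2)]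
    rw [hpow, ← Real.exp_add, Real.rpow_def_of_pos hd0]
    apply Real.exp_le_exp.2
    nlinarith [mul_nonneg hd0.le (sub_nonneg.2 hlog2)]
  -- decompose the bad set
  set Bad1 : Set (EuclideanSpace ℝ (Fin d)) :=
    ⋃ j' : Fin k, ({ξ | t ≤ ⟪μ j', ξ⟫} ∪ {ξ | t ≤ ⟪-(μ j'), ξ⟫}) with hBad1
  have hsub : {ξ : EuclideanSpace ℝ (Fin d) |
      ¬ ((∀ j', |⟪μ j', ξ⟫| ≤ t) ∧ ‖ξ‖ ≤ 2 * Real.sqrt d)} ⊆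
      Bad1 ∪ {ξ | 2 * Real.sqrt d ≤ ‖ξ‖} := by
    intro ξ hξ
    simp only [Set.mem_setOf_eq] at hξ
    rcases not_and_or.1 hξ with h | h
    · push_neg at h
      obtain ⟨j', hj'⟩ := h
      refine Set.mem_union_left _ (Set.mem_iUnion.2 ⟨j', ?_⟩)
      rcases lt_abs.1 hj' with h1 | h2
      · exact Set.mem_union_left _ h1.le
      · refine Set.mem_union_right _ ?_
        simp only [Set.mem_setOf_eq, inner_neg_left]
        linarith
    · exact Set.mem_union_right _ (by simpa using (not_le.1 h).le)
  refine (measure_mono hsub).trans ?_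
  refine (measure_union_le _ _).trans ?_
  have hB1 : stdGaussian d Bad1 ≤
      ENNReal.ofReal (2 * k * (d : ℝ) ^ (-(Real.log d) / 2)) := by
    refine (measure_iUnion_le _).trans ?_
    have heach : ∀ j' : Fin k,
        stdGaussian d ({ξ | t ≤ ⟪μ j', ξ⟫} ∪ {ξ | t ≤ ⟪-(μ j'), ξ⟫}) ≤
          ENNReal.ofReal (2 * (d : ℝ) ^ (-(Real.log d) / 2)) := by
      intro j'
      refine (measure_union_le _ _).trans ?_
      refine le_trans (add_le_add (hhalf _ (hnorm j')) (hhalf _ (hneg j'))) ?_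
      rw [← ENNReal.ofReal_add (by positivity) (by positivity)]
      apply le_of_eq
      congr 1
      ring
    calc (∑' j' : Fin k, stdGaussian d ({ξ | t ≤ ⟪μ j', ξ⟫} ∪ {ξ | t ≤ ⟪-(μ j'), ξ⟫})) ≤
        ∑' z : Fin k, ENNReal.ofReal (2 * (d : ℝ) ^ (-(Real.log d) / 2)) :=
          ENNReal.tsum_le_tsum heach
      _ = (k : ENNReal) * ENNReal.ofReal (2 * (d : ℝ) ^ (-(Real.log d) / 2)) := by
          rw [tsum_fintype, Finset.sum_const, card_univ, Fintype.card_fin, nsmul_eq_mul]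
      _ = ENNReal.ofReal (2 * k * (d : ℝ) ^ (-(Real.log d) / 2)) := by
          rw [← ENNReal.ofReal_natCast k, ← ENNReal.ofReal_mul (by positivity)]
          congr 1
          ring
  refine (add_le_add hB1 hnt).trans ?_
  rw [← ENNReal.ofReal_add (by positivity) (by positivity)]
  apply ENNReal.ofReal_le_ofReal
  have : (0:ℝ) ≤ (d : ℝ) ^ (-(Real.log d)) := by positivity
  linarith

theorem featureAveragingRegime_clean_accuracy (d k m : ℕ) (hd : 2 ≤ d) (hk : 1 ≤ k)
    (hm : 1 ≤ m) (hlog : 8 * k * Real.log d ≤ Real.sqrt d)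
    (μ : Fin k → EuclideanSpace ℝ (Fin d))
    (hnorm : ∀ j, ‖μ j‖ = Real.sqrt d)
    (horth : ∀ i j, i ≠ j → ⟪μ i, μ j⟫ = 0)
    (s : Fin k → ℝ) (hs : ∀ j, s j = 1 ∨ s j = -1)
    (c : ℝ) (hc : 1 ≤ c)
    (wp wn : Fin m → EuclideanSpace ℝ (Fin d)) (bp bn : Fin m → ℝ)
    (lam eps : ℝ) (hlam : 0 < lam) (heps : 0 ≤ eps) (hle : (12 + 4 * c) * eps < lam)
    (hwp : ∀ r, ‖wp r - (lam / d) • ∑ j ∈ univ.filter (fun j => s j = 1), μ j‖ ≤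
      eps / Real.sqrt d)
    (hwn : ∀ r, ‖wn r - (lam / d) • ∑ j ∈ univ.filter (fun j => s j = -1), μ j‖ ≤
      eps / Real.sqrt d)
    (hbp : ∀ r, |bp r| ≤ eps) (hbn : ∀ r, |bn r| ≤ eps) :
    ENNReal.ofReal (1 - 2 * k * (d : ℝ) ^ (-(Real.log d) / 2) -
        2 * (d : ℝ) ^ (-(Real.log d))) ≤
      (((k : ENNReal)⁻¹ • (Measure.count : Measure (Fin k))).prod (stdGaussian d))
        {p : Fin k × EuclideanSpace ℝ (Fin d) |
          sgn (twoLayer wp wn bp bn (μ p.1 + p.2)) = s p.1} := by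
  have hd0 : (0 : ℝ) < d := by
    have : (2:ℝ) ≤ d := by exact_mod_cast hd
    linarith
  have hd1 : (1 : ℝ) < d := by
    have : (2:ℝ) ≤ d := by exact_mod_cast hd
    linarith
  have hld : 0 < Real.log d := Real.log_pos hd1
  have hsd : 0 < Real.sqrt d := Real.sqrt_pos.2 hd0
  have hK : (k : ℝ) * Real.log d ≤ Real.sqrt d / 8 := by linarith
  set G : Set (EuclideanSpace ℝ (Fin d)) :=
    {ξ | (∀ j', |⟪μ j', ξ⟫| ≤ Real.sqrt d * Real.log d) ∧ ‖ξ‖ ≤ 2 * Real.sqrt d} with hG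
  have hGmeas : MeasurableSet G := by
    have hGeq : G = (⋂ j' : Fin k, {ξ : EuclideanSpace ℝ (Fin d) |
        |⟪μ j', ξ⟫| ≤ Real.sqrt d * Real.log d}) ∩
        {ξ : EuclideanSpace ℝ (Fin d) | ‖ξ‖ ≤ 2 * Real.sqrt d} := by
      ext ξ
      simp [hG, Set.mem_iInter]
    rw [hGeq]
    refine MeasurableSet.inter (MeasurableSet.iInter fun j' => ?_) ?_
    · exact measurableSet_le
        ((continuous_const.inner continuous_id).abs.measurable) measurable_const
    · exact measurableSet_le continuous_norm.measurable measurable_const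
  have hGc : stdGaussian d Gᶜ ≤
      ENNReal.ofReal (2 * k * (d : ℝ) ^ (-(Real.log d) / 2) + 2 * (d : ℝ) ^ (-(Real.log d))) := by
    have h := good_set_bound d k hd hk hlog μ hnorm
    have hco : Gᶜ = {ξ : EuclideanSpace ℝ (Fin d) |
        ¬ ((∀ j', |⟪μ j', ξ⟫| ≤ Real.sqrt d * Real.log d) ∧ ‖ξ‖ ≤ 2 * Real.sqrt d)} := by
      rw [hG]
      exact Set.compl_setOf _
    rw [hco]
    exact h
  have hν : ((k : ENNReal)⁻¹ • (Measure.count : Measure (Fin k))) Set.univ = 1 := by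
    rw [Measure.smul_apply, Measure.count_univ, smul_eq_mul, ENat.card_eq_coe_fintype_card, Fintype.card_fin, ENat.toENNReal_coe]
    exact ENNReal.inv_mul_cancel (by exact_mod_cast (by omega : k ≠ 0)) (by simp)
  have hincl : (Set.univ ×ˢ G) ⊆ {p : Fin k × EuclideanSpace ℝ (Fin d) |
      sgn (twoLayer wp wn bp bn (μ p.1 + p.2)) = s p.1} := by
    rintro ⟨j, ξ⟩ hp
    obtain ⟨-, hξ1, hξ2⟩ := Set.mem_prod.1 hp
    show sgn (twoLayer wp wn bp bn (μ j + ξ)) = s j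
    rcases hs j with hsj | hsj
    · have hjA : j ∈ univ.filter (fun j => s j = 1) :=
        Finset.mem_filter.2 ⟨Finset.mem_univ _, hsj⟩
      have hjB : j ∉ univ.filter (fun j => s j = -1) := by
        simp only [Finset.mem_filter, not_and]
        intro _ h
        rw [hsj] at h
        norm_num at h
      have hpos := twoLayer_core (by omega) hm hnorm horth hlam heps hc hle hK _ _
        wp wn bp bn hwp hwn hbp hbn j hjA hjB ξ hξ1 hξ2
      rw [hsj]
      unfold sgn twoLayer
      rw [if_pos hpos]
    · have hjA : j ∈ univ.filter (fun j => s j = -1) :=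
        Finset.mem_filter.2 ⟨Finset.mem_univ _, hsj⟩
      have hjB : j ∉ univ.filter (fun j => s j = 1) := by
        simp only [Finset.mem_filter, not_and]
        intro _ h
        rw [hsj] at h
        norm_num at h
      have hpos := twoLayer_core (by omega) hm hnorm horth hlam heps hc hle hK _ _
        wn wp bn bp hwn hwp hbn hbp j hjA hjB ξ hξ1 hξ2
      have hneg : twoLayer wp wn bp bn (μ j + ξ) < 0 := by
        unfold twoLayer
        linarith
      rw [hsj]
      unfold sgn
      rw [if_neg (not_lt.2 hneg.le)]
  refine le_trans ?_ (measure_mono hincl)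
  rw [Measure.prod_prod, hν, one_mul]
  have hone : stdGaussian d G + stdGaussian d Gᶜ = 1 := by
    rw [measure_add_measure_compl hGmeas, measure_univ]
  rw [show (1 : ℝ) - 2 * k * (d:ℝ) ^ (-(Real.log d)/2) - 2 * (d:ℝ) ^ (-(Real.log d)) =
    1 - (2 * k * (d:ℝ) ^ (-(Real.log d)/2) + 2 * (d:ℝ) ^ (-(Real.log d))) by ring]
  rw [ENNReal.ofReal_sub 1 (by positivity), ENNReal.ofReal_one, tsub_le_iff_right]
  calc (1 : ENNReal) = stdGaussian d G + stdGaussian d Gᶜ := hone.symm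
    _ ≤ stdGaussian d G +
        ENNReal.ofReal (2 * k * (d:ℝ) ^ (-(Real.log d)/2) + 2 * (d:ℝ) ^ (-(Real.log d))) :=
      add_le_add_right hGc _
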